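/- Let t > 0, let η be a probability measure on [0,∞), and let φ : (0,∞) → [0,∞) satisfy ∫_{[0,∞)} e^{−λs} dη(s) = e^{−tφ(λ)} for every λ > 0. Suppose there are constants c₁ > 0, γ > 0 and s₀ > 0 such that φ(λ) ≤ c₁·λ^γ for all λ ∈ (0, s₀]. Then ∫_1^∞ η((u,∞)) · (du/u) < ∞. -/

import Mathlib

open MeasureTheory
open Set in
lemma tail_bound
    (t : ℝ) (η : Measure ℝ) [IsProbabilityMeasure η]
    (hsupp : η (Set.Iio 0) = 0)
    (φ : ℝ → ℝ)
    (hLaplace : ∀ l : ℝ, 0 < l →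
      ∫ s in Set.Ici (0:ℝ), Real.exp (-l * s) ∂η = Real.exp (-(t * φ l)))
    (u : ℝ) (hu : 1 ≤ u) :
    (η (Set.Ioi u)).toReal * (1 - Real.exp (-1)) ≤ 1 - Real.exp (-(t * φ (1/u))) := by
  have hu0 : (0:ℝ) < u := lt_of_lt_of_le one_pos hu
  set f : ℝ → ℝ := fun s => Real.exp (-(1/u) * s) with hf
  have hcont : Continuous f := by fun_prop
  have hintf : IntegrableOn f (Set.Ici 0) η := by
    apply Measure.integrableOn_of_bounded (M := 1) (measure_ne_top η _)
      hcont.aestronglyMeasurable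
    filter_upwards [ae_restrict_mem measurableSet_Ici] with s hs
    rw [Real.norm_eq_abs, abs_of_pos (Real.exp_pos _)]
    apply Real.exp_le_one_iff.2
    have : (0:ℝ) ≤ (1/u) * s := mul_nonneg (by positivity) hs
    linarith
  have hIci : η (Set.Ici 0) = 1 := by
    have : η (Set.Iio 0)ᶜ = η Set.univ - η (Set.Iio 0) :=
      measure_compl measurableSet_Iio (measure_ne_top _ _)
    rw [hsupp, measure_univ] at this
    simpa [Set.compl_Iio] using this
  have hintg : IntegrableOn (fun s => 1 - f s) (Set.Ici 0) η :=
    (integrableOn_const (by rw [hIci]; exact ENNReal.one_ne_top)).sub hintf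
  have h1 : ∫ s in Set.Ici (0:ℝ), (1 - f s) ∂η = 1 - Real.exp (-(t * φ (1/u))) := by
    rw [integral_sub (integrableOn_const (by rw [hIci]; exact ENNReal.one_ne_top) :
      IntegrableOn (fun _ => (1:ℝ)) (Set.Ici 0) η) hintf,
      setIntegral_const, measureReal_def, hIci, hLaplace (1/u) (by positivity)]
    simp
  have h2 : (η (Set.Ioi u)).toReal * (1 - Real.exp (-1)) ≤
      ∫ s in Set.Ioi u, (1 - f s) ∂η := by
    have := setIntegral_mono_on
      (f := fun _ : ℝ => 1 - Real.exp (-1)) (g := fun s => 1 - f s) (s := Set.Ioi u)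
      (integrableOn_const (measure_ne_top _ _))
      (hintg.mono_set (fun x hx => le_trans hu0.le (le_of_lt hx)))
      measurableSet_Ioi ?_
    · rw [setIntegral_const, measureReal_def, smul_eq_mul] at this; exact this
    · intro x hx
      have hx' : u < x := hx
      have hc : (1/u) * u = 1 := one_div_mul_cancel hu0.ne'
      have hmul := mul_le_mul_of_nonneg_left hx'.le (one_div_pos.2 hu0).le
      have : f x ≤ Real.exp (-1) := Real.exp_le_exp.2 (by linarith)
      show 1 - Real.exp (-1) ≤ 1 - f x
      linarith
  have h3 : ∫ s in Set.Ioi u, (1 - f s) ∂η ≤ ∫ s in Set.Ici (0:ℝ), (1 - f s) ∂η := by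
    apply setIntegral_mono_set hintg
    · filter_upwards [ae_restrict_mem measurableSet_Ici] with s hs
      have hms : (0:ℝ) ≤ (1/u) * s := mul_nonneg (one_div_pos.2 hu0).le hs
      have : f s ≤ 1 := Real.exp_le_one_iff.2 (by linarith)
      simp only [Pi.zero_apply]; linarith
    · exact HasSubset.Subset.eventuallyLE (fun x hx => le_trans hu0.le (le_of_lt hx))
  linarith


/-- Assumption (S2) of the paper holds under (L1): if the Laplace exponent satisfies
`φ(λ) ≤ c₁ λ^γ` for small `λ`, then `∫_1^∞ η((u,∞)) du/u < ∞`. -/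
theorem stmt_12
    (t : ℝ) (ht : 0 < t)
    (η : Measure ℝ) [IsProbabilityMeasure η] (hsupp : η (Set.Iio 0) = 0)
    (φ : ℝ → ℝ) (hφ : ∀ l : ℝ, 0 < l → 0 ≤ φ l)
    (hLaplace : ∀ l : ℝ, 0 < l →
      ∫ s in Set.Ici (0:ℝ), Real.exp (-l * s) ∂η = Real.exp (-(t * φ l)))
    (c₁ γ s₀ : ℝ) (hc₁ : 0 < c₁) (hγ : 0 < γ) (hs₀ : 0 < s₀)
    (hφle : ∀ l : ℝ, 0 < l → l ≤ s₀ → φ l ≤ c₁ * l ^ γ) :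
    ∫⁻ u in Set.Ioi (1:ℝ), η (Set.Ioi u) / ENNReal.ofReal u < ⊤ := by
  set M : ℝ := max 1 (1/s₀) with hM
  have hM1 : (1:ℝ) ≤ M := le_max_left _ _
  have hM0 : (0:ℝ) < M := lt_of_lt_of_le one_pos hM1
  have hd : (0:ℝ) < 1 - Real.exp (-1) := by
    have : Real.exp (-1) < 1 := Real.exp_lt_one_iff.2 (by norm_num)
    linarith
  set C : ℝ := t * c₁ / (1 - Real.exp (-1)) with hC
  have hC0 : 0 ≤ C := by positivity
  -- tail estimate for u ≥ M
  have htail : ∀ u : ℝ, M ≤ u → η (Set.Ioi u) ≤ ENNReal.ofReal (C * u ^ (-γ)) := by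
    intro u hu
    have hu1 : (1:ℝ) ≤ u := le_trans hM1 hu
    have hu0 : (0:ℝ) < u := lt_of_lt_of_le one_pos hu1
    have hus : 1/u ≤ s₀ := by
      rw [div_le_iff₀ hu0]
      have h1 : 1/s₀ ≤ u := le_trans (le_max_right _ _) hu
      rw [div_le_iff₀ hs₀] at h1
      linarith
    have h0 := tail_bound t η hsupp φ hLaplace u hu1
    have h1 : 1 - Real.exp (-(t * φ (1/u))) ≤ t * φ (1/u) := by
      have := Real.add_one_le_exp (-(t * φ (1/u)))
      linarith
    have h2 : φ (1/u) ≤ c₁ * (1/u) ^ γ := hφle (1/u) (by positivity) hus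
    have h3 : (1/u : ℝ) ^ γ = u ^ (-γ) := by
      rw [one_div, Real.inv_rpow hu0.le, ← Real.rpow_neg hu0.le]
    have h4 : (η (Set.Ioi u)).toReal ≤ C * u ^ (-γ) := by
      rw [hC, div_mul_eq_mul_div, le_div_iff₀ hd]
      have hmul : t * φ (1/u) ≤ t * (c₁ * u ^ (-γ)) := by
        rw [← h3]; exact mul_le_mul_of_nonneg_left h2 ht.le
      nlinarith
    exact (ENNReal.le_ofReal_iff_toReal_le (measure_ne_top _ _)
      (by positivity)).2 h4
  have hsplit : Set.Ioi (1:ℝ) = Set.Ioc 1 M ∪ Set.Ioi M :=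
    (Set.Ioc_union_Ioi_eq_Ioi hM1).symm
  rw [hsplit, lintegral_union measurableSet_Ioi (Set.Ioc_disjoint_Ioi le_rfl)]
  apply ENNReal.add_lt_top.2
  constructor
  · calc ∫⁻ u in Set.Ioc 1 M, η (Set.Ioi u) / ENNReal.ofReal u
        ≤ ∫⁻ _ in Set.Ioc 1 M, 1 := by
          apply setLIntegral_mono measurable_const
          intro u hu
          have h1u : (1:ℝ) ≤ u := le_of_lt hu.1
          calc η (Set.Ioi u) / ENNReal.ofReal u ≤ 1 / 1 :=
                ENNReal.div_le_div prob_le_one (ENNReal.one_le_ofReal.2 h1u)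
            _ = 1 := by simp
      _ = volume (Set.Ioc 1 M) := by rw [setLIntegral_const, one_mul]
      _ < ⊤ := measure_Ioc_lt_top
  · calc ∫⁻ u in Set.Ioi M, η (Set.Ioi u) / ENNReal.ofReal u
        ≤ ∫⁻ u in Set.Ioi M, ENNReal.ofReal (C * u ^ (-γ - 1)) := by
          apply setLIntegral_mono (by fun_prop)
          intro u hu
          have huM : M ≤ u := le_of_lt hu
          have hu0 : (0:ℝ) < u := lt_of_lt_of_le hM0 huM
          calc η (Set.Ioi u) / ENNReal.ofReal u
              ≤ ENNReal.ofReal (C * u ^ (-γ)) / ENNReal.ofReal u :=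
                ENNReal.div_le_div (htail u huM) le_rfl
            _ = ENNReal.ofReal (C * u ^ (-γ) / u) :=
                (ENNReal.ofReal_div_of_pos hu0).symm
            _ = ENNReal.ofReal (C * u ^ (-γ - 1)) := by
                congr 1
                rw [mul_div_assoc, div_eq_mul_inv, ← Real.rpow_neg_one u,
                  ← Real.rpow_add hu0]
                ring_nf
      _ < ⊤ := by
          apply Integrable.lintegral_lt_top
          exact (integrableOn_Ioi_rpow_of_lt (by linarith) hM0).const_mul C
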